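/- arXiv:2004.05022 — 2 statements merged into one kernel-verified Lean document; each statement's English description precedes it below -/
import Mathlib

section
/- Let s ≥ 0 and t ≥ 2, and let G be a (K_t, sP1+P5)-free graph. Let X and Y be disjoint vertex sets such that some vertex d is adjacent to every vertex of X and to no vertex of Y. Then every induced matching in G between X and Y has size less than R(t−1, R(t−1, s+2)), where R denotes the graph Ramsey number. -/
/-- The disjoint union of `s` isolated vertices and a path on 5 vertices. -/
def sP1P5 (s : ℕ) : SimpleGraph (Fin s ⊕ Fin 5) where
  Adj x y := match x, y with
    | Sum.inr u, Sum.inr v => (SimpleGraph.pathGraph 5).Adj u v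
    | _, _ => False
  symm := ⟨by rintro (u | u) (v | v) h <;> simp_all; exact h.symm⟩
  loopless := ⟨by rintro (u | u) h <;> simp_all⟩

/-- An induced matching of size `m` between `A` and `B`, given by vertex families `a`, `b`. -/
def IndMatch {V : Type} (G : SimpleGraph V) (A B : Set V) {m : ℕ}
    (a b : Fin m → V) : Prop :=
  Function.Injective a ∧ Function.Injective b ∧
  (∀ i, a i ∈ A) ∧ (∀ i, b i ∈ B) ∧
  (∀ i j, G.Adj (a i) (b j) ↔ i = j) ∧
  (∀ i j, i ≠ j → ¬ G.Adj (a i) (a j) ∧ ¬ G.Adj (b i) (b j))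

set_option linter.unreachableTactic false

set_option maxHeartbeats 1000000 in
lemma embed_aux {V : Type} (G : SimpleGraph V) (s : ℕ) (d x0 x1 y0 y1 : V) (c : Fin s → V)
    (hcinj : Function.Injective c)
    (a1 : G.Adj y0 x0) (a2 : G.Adj x0 d) (a3 : G.Adj d x1) (a4 : G.Adj x1 y1)
    (n1 : ¬ G.Adj y0 d) (n2 : ¬ G.Adj y0 x1) (n3 : ¬ G.Adj y0 y1)
    (n4 : ¬ G.Adj x0 x1) (n5 : ¬ G.Adj x0 y1) (n6 : ¬ G.Adj d y1)
    (ncc : ∀ i j, ¬ G.Adj (c i) (c j))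
    (nc0 : ∀ i, ¬ G.Adj (c i) y0) (nc1 : ∀ i, ¬ G.Adj (c i) x0)
    (nc2 : ∀ i, ¬ G.Adj (c i) d) (nc3 : ∀ i, ¬ G.Adj (c i) x1)
    (nc4 : ∀ i, ¬ G.Adj (c i) y1)
    (e0 : ∀ i, c i ≠ y0) (e1 : ∀ i, c i ≠ x0) (e2 : ∀ i, c i ≠ d)
    (e3 : ∀ i, c i ≠ x1) (e4 : ∀ i, c i ≠ y1)
    (exy : x0 ≠ y1) (eyx : y0 ≠ x1) (exx : x0 ≠ x1) (eyy : y0 ≠ y1)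
    (edy0 : d ≠ y0) (edy1 : d ≠ y1) :
    Nonempty (sP1P5 s ↪g G) := by
  have a1' := a1.symm; have a2' := a2.symm; have a3' := a3.symm; have a4' := a4.symm
  have n1' : ¬ G.Adj d y0 := fun h => n1 h.symm
  have n2' : ¬ G.Adj x1 y0 := fun h => n2 h.symm
  have n3' : ¬ G.Adj y1 y0 := fun h => n3 h.symm
  have n4' : ¬ G.Adj x1 x0 := fun h => n4 h.symm
  have n5' : ¬ G.Adj y1 x0 := fun h => n5 h.symm
  have n6' : ¬ G.Adj y1 d := fun h => n6 h.symm
  have nc0' : ∀ i, ¬ G.Adj y0 (c i) := fun i h => nc0 i h.symm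
  have nc1' : ∀ i, ¬ G.Adj x0 (c i) := fun i h => nc1 i h.symm
  have nc2' : ∀ i, ¬ G.Adj d (c i) := fun i h => nc2 i h.symm
  have nc3' : ∀ i, ¬ G.Adj x1 (c i) := fun i h => nc3 i h.symm
  have nc4' : ∀ i, ¬ G.Adj y1 (c i) := fun i h => nc4 i h.symm
  have e0' : ∀ i, y0 ≠ c i := fun i h => e0 i h.symm
  have e1' : ∀ i, x0 ≠ c i := fun i h => e1 i h.symm
  have e2' : ∀ i, d ≠ c i := fun i h => e2 i h.symm
  have e3' : ∀ i, x1 ≠ c i := fun i h => e3 i h.symm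
  have e4' : ∀ i, y1 ≠ c i := fun i h => e4 i h.symm
  have selfs : ∀ v, ¬ G.Adj v v := fun v => G.irrefl
  have exy0 : y0 ≠ x0 := a1.ne
  have edx0 : x0 ≠ d := a2.ne
  have edx1 : d ≠ x1 := a3.ne
  have exy1 : x1 ≠ y1 := a4.ne
  have hinj : Function.Injective (Sum.elim c ![y0, x0, d, x1, y1]) := by
    rintro (i|u) (j|v) h <;> simp only [Sum.elim_inl, Sum.elim_inr] at h
    · exact congrArg Sum.inl (hcinj h)
    · exfalso
      fin_cases v <;>
        simp_all [Matrix.cons_val_zero, Matrix.cons_val_one, Matrix.head_cons,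
          Matrix.cons_val_two, Matrix.cons_val_three, Matrix.cons_val_four,
          Matrix.vecTail, Matrix.vecHead]
    · exfalso
      fin_cases u <;>
        simp_all [Matrix.cons_val_zero, Matrix.cons_val_one, Matrix.head_cons,
          Matrix.cons_val_two, Matrix.cons_val_three, Matrix.cons_val_four,
          Matrix.vecTail, Matrix.vecHead]
    · congr 1
      fin_cases u <;> fin_cases v <;>
        simp_all [Matrix.cons_val_zero, Matrix.cons_val_one, Matrix.head_cons,
          Matrix.cons_val_two, Matrix.cons_val_three, Matrix.cons_val_four,
          Matrix.vecTail, Matrix.vecHead] <;>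
        first
        | rfl
        | (exfalso; first
            | exact exy h | exact eyx h | exact exx h | exact eyy h
            | exact edy0 h | exact edy1 h
            | exact exy h.symm | exact eyx h.symm | exact exx h.symm | exact eyy h.symm
            | exact edy0 h.symm | exact edy1 h.symm
            | exact exy0 h | exact edx0 h | exact edx1 h | exact exy1 h
            | exact exy0 h.symm | exact edx0 h.symm | exact edx1 h.symm | exact exy1 h.symm)
  have hrel : ∀ x y : Fin s ⊕ Fin 5,
      G.Adj (Sum.elim c ![y0, x0, d, x1, y1] x) (Sum.elim c ![y0, x0, d, x1, y1] y) ↔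
        (sP1P5 s).Adj x y := by
    rintro (i|u) (j|v) <;>
      simp only [Sum.elim_inl, Sum.elim_inr, sP1P5]
    · constructor
      · exact fun h => ncc i j h
      · exact False.elim
    · constructor
      · intro h
        fin_cases v <;>
          simp_all [Matrix.cons_val_zero, Matrix.cons_val_one, Matrix.head_cons,
            Matrix.cons_val_two, Matrix.cons_val_three, Matrix.cons_val_four,
            Matrix.vecTail, Matrix.vecHead]
      · exact False.elim
    · constructor
      · intro h
        fin_cases u <;>
          simp_all [Matrix.cons_val_zero, Matrix.cons_val_one, Matrix.head_cons,
            Matrix.cons_val_two, Matrix.cons_val_three, Matrix.cons_val_four,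
            Matrix.vecTail, Matrix.vecHead]
      · exact False.elim
    · fin_cases u <;> fin_cases v <;>
        simp_all [Matrix.cons_val_zero, Matrix.cons_val_one, Matrix.head_cons,
          Matrix.cons_val_two, Matrix.cons_val_three, Matrix.cons_val_four,
          Matrix.vecTail, Matrix.vecHead, SimpleGraph.pathGraph_adj] <;>
        decide
  exact ⟨⟨⟨Sum.elim c ![y0, x0, d, x1, y1], hinj⟩, fun {x y} => hrel x y⟩⟩

theorem stmt_13 {V : Type} (G : SimpleGraph V) (s t : ℕ) (ht : 2 ≤ t)
    (R : ℕ → ℕ → ℕ)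
    (hR : ∀ (p q : ℕ) (W : Type) (_ : Fintype W) (H : SimpleGraph W),
      R p q ≤ Fintype.card W →
        (∃ S : Finset W, H.IsNClique p S) ∨
        (∃ S : Finset W, S.card = q ∧ ∀ u ∈ S, ∀ v ∈ S, u ≠ v → ¬ H.Adj u v))
    (hKt : G.CliqueFree t) (hfree : ¬ Nonempty (sP1P5 s ↪g G))
    (X Y : Set V) (hXY : Disjoint X Y) (d : V)
    (hdX : ∀ x ∈ X, G.Adj d x) (hdY : ∀ y ∈ Y, ¬ G.Adj d y)
    (m : ℕ) (a b : Fin m → V) (hM : IndMatch G X Y a b) :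
    m < R (t - 1) (R (t - 1) (s + 2)) := by
  obtain ⟨hainj, hbinj, haX, hbY, hab, hnon⟩ := hM
  have hdx : ∀ i, G.Adj d (a i) := fun i => hdX _ (haX i)
  have hdy : ∀ i, ¬ G.Adj d (b i) := fun i => hdY _ (hbY i)
  have hne_ab : ∀ i j, a i ≠ b j := by
    intro i j h
    exact (Set.disjoint_left.mp hXY (haX i)) (h ▸ hbY j)
  -- lower bounds on R
  have hRge : ∀ p q, 2 ≤ p → q ≤ R p q := by
    intro p q hp
    rcases hR p q (Fin (R p q)) inferInstance ⊥ (by simp) with ⟨S, hS⟩ | ⟨S, hScard, _⟩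
    · exfalso
      have h2 : 1 < S.card := by rw [hS.2]; omega
      obtain ⟨u, hu, v, hv, huv⟩ := Finset.one_lt_card.mp h2
      exact hS.1 hu hv huv
    · calc q = S.card := hScard.symm
        _ ≤ Fintype.card (Fin (R p q)) := Finset.card_le_card (Finset.subset_univ S) |>.trans_eq (by simp)
        _ = R p q := by simp
  have hRpos : ∀ p q, 1 ≤ p → 1 ≤ q → 1 ≤ R p q := by
    intro p q hp hq
    by_contra h
    have h0 : R p q = 0 := by omega
    rcases hR p q (Fin 0) inferInstance ⊥ (by simp [h0]) with ⟨S, hS⟩ | ⟨S, hScard, _⟩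
    · have hc : S.card = p := hS.2
      have he : S = ∅ := Finset.eq_empty_of_isEmpty S
      rw [he] at hc
      simp at hc
      omega
    · have he : S = ∅ := Finset.eq_empty_of_isEmpty S
      rw [he] at hScard
      simp at hScard
      omega
  -- main combinatorial bound : m ≤ s + 1
  have key : m ≤ s + 1 := by
    by_contra hkey
    have hm : s + 2 ≤ m := by omega
    have h0 : 0 < m := by omega
    have h1 : 1 < m := by omega
    have h2 : ∀ i : Fin s, i.val + 2 < m := fun i => by omega
    set i0 : Fin m := ⟨0, h0⟩ with hi0
    set i1 : Fin m := ⟨1, h1⟩ with hi1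
    set c : Fin s → V := fun i => b ⟨i.val + 2, h2 i⟩ with hc
    have hne01 : i0 ≠ i1 := by simp [hi0, hi1, Fin.ext_iff]
    have hgne0 : ∀ i : Fin s, (⟨i.val + 2, h2 i⟩ : Fin m) ≠ i0 := by
      intro i; simp [hi0, Fin.ext_iff]
    have hgne1 : ∀ i : Fin s, (⟨i.val + 2, h2 i⟩ : Fin m) ≠ i1 := by
      intro i; simp [hi1, Fin.ext_iff]
    have hd_ne_b : ∀ i : Fin m, d ≠ b i := by
      intro i h
      obtain ⟨j, hj⟩ : ∃ j : Fin m, j ≠ i := by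
        by_cases hcase : i = i0
        · exact ⟨i1, fun hx => hne01 (hx ▸ hcase.symm ▸ rfl)⟩
        · exact ⟨i0, fun hx => hcase (hx ▸ rfl)⟩
      exact hj ((hab j i).mp (h ▸ (hdx j).symm))
    have hcinj : Function.Injective c := by
      intro i j h
      have := hbinj h
      simp only [Fin.mk.injEq] at this
      exact Fin.ext (by omega)
    refine hfree (embed_aux G s d (a i0) (a i1) (b i0) (b i1) c hcinj
      ((hab i0 i0).mpr rfl).symm (hdx i0).symm (hdx i1) ((hab i1 i1).mpr rfl)
      (fun h => hdy i0 h.symm)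
      (fun h => (fun hx => hne01 hx.symm) ((hab i1 i0).mp h.symm))
      (hnon i0 i1 hne01).2
      (hnon i0 i1 hne01).1
      (fun h => hne01 ((hab i0 i1).mp h))
      (hdy i1)
      ?_ ?_ ?_ ?_ ?_ ?_ ?_ ?_ ?_ ?_ ?_
      (hne_ab i0 i1) (fun h => hne_ab i1 i0 h.symm)
      (fun h => hne01 (hainj h)) (fun h => hne01 (hbinj h))
      (hd_ne_b i0) (hd_ne_b i1))
    · -- ncc
      intro i j
      by_cases hij : i = j
      · subst hij; exact G.irrefl
      · refine (hnon _ _ ?_).2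
        simp only [ne_eq, Fin.mk.injEq]
        intro hx
        exact hij (Fin.ext (by omega))
    · exact fun i => (hnon _ i0 (hgne0 i)).2
    · exact fun i h => (hgne0 i) ((hab i0 _).mp h.symm).symm
    · exact fun i h => hdy _ h.symm
    · exact fun i h => (hgne1 i) ((hab i1 _).mp h.symm).symm
    · exact fun i => (hnon _ i1 (hgne1 i)).2
    · exact fun i h => hgne0 i (hbinj h)
    · exact fun i h => hne_ab i0 _ h.symm
    · exact fun i h => hd_ne_b _ h.symm
    · exact fun i h => hne_ab i1 _ h.symm
    · exact fun i h => hgne1 i (hbinj h)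
  -- conclude
  rcases Nat.lt_or_ge t 3 with ht2 | ht3
  · -- t = 2 : G has no edges, so m = 0
    have ht2' : t = 2 := by omega
    subst ht2'
    have hbot : G = ⊥ := SimpleGraph.cliqueFree_two.mp hKt
    have hm0 : m = 0 := by
      by_contra hm
      have h0 : (0 : ℕ) < m := Nat.pos_of_ne_zero hm
      have hadj := (hab ⟨0, h0⟩ ⟨0, h0⟩).mpr rfl
      rw [hbot] at hadj
      exact hadj
    rw [hm0]
    have hle1 : 1 ≤ R 1 (s + 2) := hRpos 1 (s + 2) (by omega) (by omega)
    have hle2 : 1 ≤ R 1 (R 1 (s + 2)) := hRpos 1 _ (by omega) hle1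
    exact hle2
  · have hg1 : s + 2 ≤ R (t - 1) (s + 2) := hRge (t - 1) (s + 2) (by omega)
    have hg2 : R (t - 1) (s + 2) ≤ R (t - 1) (R (t - 1) (s + 2)) :=
      hRge (t - 1) _ (by omega)
    omega
end

section
/- Every connected (sP1+P5)-free graph G (s ≥ 1, t ≥ 1 arbitrary) has a dominating set of size at most max{3, ω(G), s+4}, where ω(G) is the clique number of G. -/
namespace AuxP5
open SimpleGraph

variable {V : Type} (G : SimpleGraph V)

/-- induced P5 pattern -/
structure IndP5 (a b c d e : V) : Prop where
  hab : G.Adj a b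
  hbc : G.Adj b c
  hcd : G.Adj c d
  hde : G.Adj d e
  nac : ¬ G.Adj a c
  nad : ¬ G.Adj a d
  nae : ¬ G.Adj a e
  nbd : ¬ G.Adj b d
  nbe : ¬ G.Adj b e
  nce : ¬ G.Adj c e
  dac : a ≠ c
  dad : a ≠ d
  dae : a ≠ e
  dbd : b ≠ d
  dbe : b ≠ e
  dce : c ≠ e

def WIn (D : Finset V) (u v : V) (n : ℕ) : Prop :=
  ∃ w : G.Walk u v, w.length = n ∧ ∀ x ∈ w.support, x ∈ D

def Dom (D : Finset V) : Prop := ∀ v, v ∈ D ∨ ∃ u ∈ D, G.Adj u v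

def Conn (D : Finset V) : Prop := ∀ u ∈ D, ∀ v ∈ D, ∃ n, WIn G D u v n

noncomputable def dIn (D : Finset V) (u v : V) : ℕ := sInf {n | WIn G D u v n}

variable {G} {D : Finset V} {u v x y : V} {m n : ℕ}

lemma WIn.mem_left (h : WIn G D u v n) : u ∈ D := by
  obtain ⟨w, _, hs⟩ := h; exact hs _ w.start_mem_support

lemma WIn.mem_right (h : WIn G D u v n) : v ∈ D := by
  obtain ⟨w, _, hs⟩ := h; exact hs _ w.end_mem_support

lemma wIn_refl (hu : u ∈ D) : WIn G D u u 0 :=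
  ⟨.nil, rfl, by simpa using hu⟩

lemma wIn_adj (h : G.Adj u v) (hu : u ∈ D) (hv : v ∈ D) : WIn G D u v 1 := by
  refine ⟨.cons h .nil, rfl, ?_⟩
  intro x hx
  simp only [Walk.support_cons, Walk.support_nil, List.mem_cons, List.mem_singleton] at hx
  rcases hx with rfl | hx
  · exact hu
  · simp at hx; subst hx; exact hv

lemma WIn.reverse (h : WIn G D u v n) : WIn G D v u n := by
  obtain ⟨w, hl, hs⟩ := h
  refine ⟨w.reverse, by simpa using hl, ?_⟩
  intro x hx
  rw [Walk.support_reverse] at hx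
  exact hs x (List.mem_reverse.mp hx)

lemma WIn.append (h1 : WIn G D u v m) (h2 : WIn G D v x n) : WIn G D u x (m + n) := by
  obtain ⟨w1, hl1, hs1⟩ := h1
  obtain ⟨w2, hl2, hs2⟩ := h2
  refine ⟨w1.append w2, by simp [hl1, hl2], ?_⟩
  intro z hz
  rcases (Walk.mem_support_append_iff _ _).mp hz with h | h
  · exact hs1 z h
  · exact hs2 z h

lemma dIn_le (h : WIn G D u v n) : dIn G D u v ≤ n := Nat.sInf_le h

lemma dIn_spec (hex : ∃ n, WIn G D u v n) : WIn G D u v (dIn G D u v) :=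
  Nat.sInf_mem hex

lemma dIn_self (hu : u ∈ D) : dIn G D u u = 0 :=
  Nat.le_zero.mp (dIn_le (wIn_refl hu))

lemma eq_of_dIn_eq_zero (hex : ∃ n, WIn G D u v n) (h : dIn G D u v = 0) : u = v := by
  obtain ⟨w, hl, _⟩ := dIn_spec hex
  exact Walk.eq_of_length_eq_zero (by rw [hl, h])

lemma eq_or_adj_of_dIn_le_one (hex : ∃ n, WIn G D u v n) (h : dIn G D u v ≤ 1) :
    u = v ∨ G.Adj u v := by
  obtain ⟨w, hl, _⟩ := dIn_spec hex
  rcases Nat.le_one_iff_eq_zero_or_eq_one.mp h with h0 | h1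
  · exact Or.inl (Walk.eq_of_length_eq_zero (by rw [hl, h0]))
  · exact Or.inr (Walk.adj_of_length_eq_one (by rw [hl, h1]))


lemma mid_of_dIn_two (hex : ∃ n, WIn G D u v n) (h2 : dIn G D u v = 2) :
    ∃ m ∈ D, G.Adj u m ∧ G.Adj m v ∧ ¬ G.Adj u v ∧ u ≠ v ∧ m ≠ u ∧ m ≠ v := by
  obtain ⟨w, hl, hs⟩ := dIn_spec hex
  rw [h2] at hl
  have hu : u ∈ D := hs _ w.start_mem_support
  have hv : v ∈ D := hs _ w.end_mem_support
  cases w with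
  | nil => simp at hl
  | cons hadj w' =>
    rename_i a
    have ha : a ∈ D := by
      apply hs
      simp [Walk.support_cons]
    have hl' : w'.length = 1 := by simpa using hl
    have hav : G.Adj a v := Walk.adj_of_length_eq_one hl'
    have hnuv : ¬ G.Adj u v := fun hadj' => by
      have := dIn_le (wIn_adj hadj' hu hv); omega
    have huv : u ≠ v := fun h => by
      subst h; have h0 := dIn_self (G := G) hu; omega
    exact ⟨a, ha, hadj, hav, hnuv, huv, hadj.ne.symm, hav.ne⟩

lemma p4_of_dIn_three (hex : ∃ n, WIn G D u v n) (h3 : dIn G D u v = 3) :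
    ∃ a b, a ∈ D ∧ b ∈ D ∧ G.Adj u a ∧ G.Adj a b ∧ G.Adj b v ∧
      ¬ G.Adj u b ∧ ¬ G.Adj u v ∧ ¬ G.Adj a v ∧
      u ≠ a ∧ u ≠ b ∧ u ≠ v ∧ a ≠ b ∧ a ≠ v ∧ b ≠ v := by
  obtain ⟨w, hl, hs⟩ := dIn_spec hex
  rw [h3] at hl
  have hu : u ∈ D := hs _ w.start_mem_support
  have hv : v ∈ D := hs _ w.end_mem_support
  cases w with
  | nil => simp at hl
  | cons hadj1 w' =>
    rename_i a
    have ha : a ∈ D := by apply hs; simp [Walk.support_cons]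
    cases w' with
    | nil => simp at hl
    | cons hadj2 w'' =>
      rename_i b
      have hb : b ∈ D := by
        apply hs; simp [Walk.support_cons]
      have hl'' : w''.length = 1 := by simpa using hl
      have hbv : G.Adj b v := Walk.adj_of_length_eq_one hl''
      have hnuv : ¬ G.Adj u v := fun hadj' => by
        have := dIn_le (wIn_adj hadj' hu hv); omega
      have hnub : ¬ G.Adj u b := fun hadj' => by
        have := dIn_le ((wIn_adj hadj' hu hb).append (wIn_adj hbv hb hv)); omega
      have hnav : ¬ G.Adj a v := fun hadj' => by
        have := dIn_le ((wIn_adj hadj1 hu ha).append (wIn_adj hadj' ha hv)); omega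
      have huv : u ≠ v := fun h => by subst h; have h0 := dIn_self (G := G) hu; omega
      have hub : u ≠ b := fun h => by subst h; exact hnuv hbv
      have hav : a ≠ v := fun h => by subst h; exact hnuv hadj1
      exact ⟨a, b, ha, hb, hadj1, hadj2, hbv, hnub, hnuv, hnav,
        hadj1.ne, hub, huv, hadj2.ne, hav, hbv.ne⟩

lemma dIn_step (hex : ∃ n, WIn G D u v n) (h : 1 ≤ dIn G D u v) :
    ∃ a ∈ D, G.Adj u a ∧ (∃ n, WIn G D a v n) ∧ dIn G D a v + 1 = dIn G D u v := by
  obtain ⟨w, hl, hs⟩ := dIn_spec hex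
  have hu : u ∈ D := hs _ w.start_mem_support
  have hv : v ∈ D := hs _ w.end_mem_support
  cases w with
  | nil => simp at hl; omega
  | cons hadj w' =>
    rename_i a
    have ha : a ∈ D := by apply hs; simp [Walk.support_cons]
    have hsup' : ∀ x ∈ w'.support, x ∈ D := by
      intro x hx; apply hs; simp only [Walk.support_cons, List.mem_cons]; right; exact hx
    have hwa : WIn G D a v w'.length := ⟨w', rfl, hsup'⟩
    have hle : dIn G D a v ≤ w'.length := dIn_le hwa
    have hge : dIn G D u v ≤ dIn G D a v + 1 := by
      have h1 : WIn G D u v (1 + dIn G D a v) :=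
        (wIn_adj hadj hu ha).append (dIn_spec ⟨_, hwa⟩)
      have := dIn_le h1
      omega
    have : w'.length + 1 = dIn G D u v := by simpa using hl
    refine ⟨a, ha, hadj, ⟨_, hwa⟩, by omega⟩

lemma exists_dIn_eq_three (n : ℕ) : ∀ u, (∃ k, WIn G D u v k) → dIn G D u v = n → 3 ≤ n →
    ∃ u', (∃ k, WIn G D u' v k) ∧ dIn G D u' v = 3 := by
  induction n with
  | zero => intro u _ _ h3; omega
  | succ m ih =>
    intro u hex hd h3
    rcases Nat.lt_or_ge 3 (m + 1) with hlt | hge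
    · obtain ⟨a, _, _, hex', hd'⟩ := dIn_step hex (by omega)
      exact ih a hex' (by omega) (by omega)
    · exact ⟨u, hex, by omega⟩


/-- minimal walks from `u` avoid the farthest vertex `x`. -/
lemma avoid_far [DecidableEq V] (hc : Conn G D) (hu : u ∈ D) (hx : x ∈ D)
    (hmax : ∀ v ∈ D, dIn G D u v ≤ dIn G D u x) (hv : v ∈ D) (hne : v ≠ x) :
    ∃ w : G.Walk u v, (∀ y ∈ w.support, y ∈ D) ∧ x ∉ w.support := by
  obtain ⟨w, hl, hs⟩ := dIn_spec (hc u hu v hv)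
  by_cases hmem : x ∈ w.support
  · exfalso
    have htake : WIn G D u x (w.takeUntil x hmem).length :=
      ⟨_, rfl, fun y hy => hs y (Walk.support_takeUntil_subset w hmem hy)⟩
    have h1 : dIn G D u x ≤ (w.takeUntil x hmem).length := dIn_le htake
    have h2 : (w.takeUntil x hmem).length + (w.dropUntil x hmem).length = w.length := by
      rw [← Walk.length_append, Walk.take_spec]
    have h3 : (w.dropUntil x hmem).length ≠ 0 := by
      intro h0
      exact hne (Walk.eq_of_length_eq_zero h0).symm
    have h4 : dIn G D u v ≤ dIn G D u x := hmax v hv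
    omega
  · exact ⟨w, hs, hmem⟩

lemma conn_erase [DecidableEq V] (hc : Conn G D) (hu : u ∈ D) (hx : x ∈ D) (hxu : x ≠ u)
    (hmax : ∀ v ∈ D, dIn G D u v ≤ dIn G D u x) : Conn G (D.erase x) := by
  intro a ha b hb
  rw [Finset.mem_erase] at ha hb
  obtain ⟨w1, hs1, hn1⟩ := avoid_far hc hu hx hmax ha.2 ha.1
  obtain ⟨w2, hs2, hn2⟩ := avoid_far hc hu hx hmax hb.2 hb.1
  refine ⟨_, w1.reverse.append w2, rfl, ?_⟩
  intro z hz
  rcases (Walk.mem_support_append_iff _ _).mp hz with h | h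
  · rw [Walk.support_reverse, List.mem_reverse] at h
    exact Finset.mem_erase.mpr ⟨fun he => hn1 (he ▸ h), hs1 z h⟩
  · exact Finset.mem_erase.mpr ⟨fun he => hn2 (he ▸ h), hs2 z h⟩

/-- private neighbor of a removable vertex in a minimum connected dominating set -/
lemma private_of [DecidableEq V] (hD : Dom G D) (hc : Conn G D)
    (hmin : ∀ D' : Finset V, Dom G D' → Conn G D' → D.card ≤ D'.card)
    (hx : x ∈ D) (h2 : 2 ≤ D.card) (hce : Conn G (D.erase x)) :
    ∃ p, p ∉ D ∧ G.Adj x p ∧ ∀ d ∈ D, G.Adj d p → d = x := by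
  have hcard : (D.erase x).card < D.card := Finset.card_erase_lt_of_mem hx
  have hnotdom : ¬ Dom G (D.erase x) := by
    intro hd
    have h5 : D.card ≤ (D.erase x).card := hmin (D.erase x) hd hce
    exact absurd h5 (not_le.mpr hcard)
  rw [Dom] at hnotdom
  push_neg at hnotdom
  obtain ⟨p, hp1, hp2⟩ := hnotdom
  -- x has a neighbor in D.erase x
  obtain ⟨y, hy, hyx⟩ := Finset.exists_mem_ne (s := D) (by omega) x
  have hdge : 1 ≤ dIn G D x y := by
    rcases Nat.eq_zero_or_pos (dIn G D x y) with h0 | h1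
    · exact absurd (eq_of_dIn_eq_zero (hc x hx y hy) h0).symm hyx
    · omega
  obtain ⟨a, haD, hxa, _, _⟩ := dIn_step (hc x hx y hy) hdge
  have haE : a ∈ D.erase x := Finset.mem_erase.mpr ⟨hxa.ne.symm, haD⟩
  have hpD : p ∉ D := by
    intro hpD
    have : p = x := by
      by_contra hne
      exact hp1 (Finset.mem_erase.mpr ⟨hne, hpD⟩)
    subst this
    exact hp2 a haE hxa.symm
  rcases hD p with hmem | ⟨d, hd, hdp⟩
  · exact absurd hmem hpD
  · have hdx : d = x := by
      by_contra hne
      exact hp2 d (Finset.mem_erase.mpr ⟨hne, hd⟩) hdp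
    subst hdx
    refine ⟨p, hpD, hdp, ?_⟩
    intro d' hd' hd'p
    by_contra hne
    exact hp2 d' (Finset.mem_erase.mpr ⟨hne, hd'⟩) hd'p

/-- diameter of a minimum CDS is at most 2 in a P5-free graph -/
lemma dIn_le_two [DecidableEq V] (hD : Dom G D) (hc : Conn G D)
    (hmin : ∀ D' : Finset V, Dom G D' → Conn G D' → D.card ≤ D'.card)
    (h2 : 2 ≤ D.card) (hP5 : ∀ a b c d e : V, ¬ IndP5 G a b c d e)
    (hu : u ∈ D) (hv : v ∈ D) : dIn G D u v ≤ 2 := by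
  obtain ⟨x, hx, hmax⟩ := D.exists_max_image (fun v => dIn G D u v) ⟨u, hu⟩
  have key : dIn G D u x ≤ 2 := by
    by_contra hgt
    push_neg at hgt
    have hxu : x ≠ u := by
      intro h; subst h
      rw [dIn_self hu] at hgt; omega
    have hce := conn_erase hc hu hx hxu hmax
    obtain ⟨p, hpD, hxp, hpriv⟩ := private_of hD hc hmin hx h2 hce
    obtain ⟨u', hex', hd3⟩ := exists_dIn_eq_three (v := x) (dIn G D u x) u (hc u hu x hx) rfl
      (by omega)
    obtain ⟨a, b, haD, hbD, h1, h2', h3, n1, n2, n3, d1, d2, d3, d4, d5, d6⟩ :=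
      p4_of_dIn_three hex' hd3
    have hu'D : u' ∈ D := hex'.choose_spec.mem_left
    refine hP5 u' a b x p ⟨h1, h2', h3, hxp, n1, n2, ?_, n3, ?_, ?_, d2, d3, ?_, d5, ?_, ?_⟩
    · intro hadj; exact d3 (hpriv u' hu'D hadj)
    · intro hadj; exact d5 (hpriv a haD hadj)
    · intro hadj; exact d6 (hpriv b hbD hadj)
    · exact fun h => hpD (h ▸ hu'D)
    · exact fun h => hpD (h ▸ haD)
    · exact fun h => hpD (h ▸ hbD)
  exact le_trans (hmax v hv) key


lemma conn_erase_of_adj_all [DecidableEq V] (hxD : x ∈ D)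
    (hall : ∀ v ∈ D, v ≠ x → G.Adj x v) (hy : y ∈ D) (hyx : y ≠ x) :
    Conn G (D.erase y) := by
  have hxE : x ∈ D.erase y := Finset.mem_erase.mpr ⟨fun h => hyx h.symm, hxD⟩
  intro a ha b hb
  obtain ⟨haY, haD⟩ := Finset.mem_erase.mp ha
  obtain ⟨hbY, hbD⟩ := Finset.mem_erase.mp hb
  by_cases hax : a = x
  · by_cases hbx : b = x
    · exact ⟨0, by rw [hax, hbx]; exact wIn_refl hxE⟩
    · exact ⟨1, by rw [hax]; exact wIn_adj (hall b hbD hbx) hxE hb⟩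
  · by_cases hbx : b = x
    · exact ⟨1, by rw [hbx]; exact wIn_adj (hall a haD hax).symm ha hxE⟩
    · exact ⟨2, (wIn_adj (hall a haD hax).symm ha hxE).append (wIn_adj (hall b hbD hbx) hxE hb)⟩

lemma p5free_case [Fintype V] [DecidableEq V] (hP5 : ∀ a b c d e : V, ¬ IndP5 G a b c d e)
    (hconn : G.Connected) :
    ∃ D : Finset V, Dom G D ∧ (D.card ≤ 5 ∨ G.IsClique (D : Set V)) := by
  classical
  have hunivmem : (Finset.univ : Finset V) ∈
      (Finset.univ : Finset V).powerset.filter (fun D => Dom G D ∧ Conn G D) := by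
    rw [Finset.mem_filter]
    refine ⟨Finset.mem_powerset.mpr (Finset.subset_univ _), fun v => Or.inl (Finset.mem_univ v), ?_⟩
    intro a _ b _
    obtain ⟨w⟩ := hconn.preconnected a b
    exact ⟨w.length, w, rfl, fun x _ => Finset.mem_univ x⟩
  obtain ⟨D, hDS, hmin'⟩ := Finset.exists_min_image _ Finset.card ⟨_, hunivmem⟩
  rw [Finset.mem_filter] at hDS
  obtain ⟨-, hD, hc⟩ := hDS
  have hmin : ∀ D' : Finset V, Dom G D' → Conn G D' → D.card ≤ D'.card := by
    intro D' h1 h2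
    exact hmin' D' (by
      rw [Finset.mem_filter]
      exact ⟨Finset.mem_powerset.mpr (Finset.subset_univ _), h1, h2⟩)
  by_cases h5 : D.card ≤ 5
  · exact ⟨D, hD, Or.inl h5⟩
  by_cases hclq : G.IsClique (D : Set V)
  · exact ⟨D, hD, Or.inr hclq⟩
  -- D is not a clique and has ≥ 6 vertices
  have h2 : 2 ≤ D.card := by omega
  obtain ⟨y1, hy1, y3, hy3, hne13, hnadj13⟩ :
      ∃ y1, y1 ∈ D ∧ ∃ y3, y3 ∈ D ∧ y1 ≠ y3 ∧ ¬ G.Adj y1 y3 := by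
    rw [SimpleGraph.isClique_iff, Set.Pairwise] at hclq
    push_neg at hclq
    obtain ⟨a, ha, b, hb, hab, hnadj⟩ := hclq
    exact ⟨a, ha, b, hb, hab, hnadj⟩
  have ecc : ∀ u ∈ D, ∀ v ∈ D, dIn G D u v ≤ 2 :=
    fun u hu v hv => dIn_le_two hD hc hmin h2 hP5 hu hv
  have key : ∃ ya ym yb, ya ∈ D ∧ ym ∈ D ∧ yb ∈ D ∧ G.Adj ya ym ∧ G.Adj ym yb ∧
      ¬ G.Adj ya yb ∧ ya ≠ yb ∧ Conn G (D.erase ya) ∧ Conn G (D.erase yb) := by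
    obtain ⟨x, hxD, hmaxx⟩ := D.exists_max_image (fun v => dIn G D y1 v) ⟨y1, hy1⟩
    have hd13 : 1 ≤ dIn G D y1 y3 := by
      rcases Nat.eq_zero_or_pos (dIn G D y1 y3) with h0 | h1
      · exact absurd (eq_of_dIn_eq_zero (hc y1 hy1 y3 hy3) h0) hne13
      · omega
    have hx_ne : x ≠ y1 := by
      intro h; subst h
      have := hmaxx y3 hy3
      rw [dIn_self hy1] at this
      omega
    have cea : Conn G (D.erase x) := conn_erase hc hy1 hxD hx_ne hmaxx
    obtain ⟨x', hx'D, hmaxx'⟩ := D.exists_max_image (fun v => dIn G D x v) ⟨x, hxD⟩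
    by_cases hcase : dIn G D x x' ≤ 1
    · have hall : ∀ v ∈ D, v ≠ x → G.Adj x v := by
        intro v hv hne
        rcases eq_or_adj_of_dIn_le_one (hc x hxD v hv) (le_trans (hmaxx' v hv) hcase) with he | ha
        · exact absurd he.symm hne
        · exact ha
      have h1x : y1 ≠ x := by
        intro h; subst h
        exact hnadj13 (hall y3 hy3 (Ne.symm hne13))
      have h3x : y3 ≠ x := by
        intro h; subst h
        exact hnadj13 ((hall y1 hy1 hne13).symm)
      exact ⟨y1, x, y3, hy1, hxD, hy3, (hall y1 hy1 h1x).symm, hall y3 hy3 h3x, hnadj13, hne13,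
        conn_erase_of_adj_all hxD hall hy1 h1x, conn_erase_of_adj_all hxD hall hy3 h3x⟩
    · have hd2 : dIn G D x x' = 2 := by
        have := ecc x hxD x' hx'D; omega
      obtain ⟨mm, hmmD, hadj1, hadj2, hnadjxx', hnexx', _, _⟩ :=
        mid_of_dIn_two (hc x hxD x' hx'D) hd2
      have hx'_ne : x' ≠ x := Ne.symm hnexx'
      have ceb : Conn G (D.erase x') := conn_erase hc hxD hx'D hx'_ne hmaxx'
      exact ⟨x, mm, x', hxD, hmmD, hx'D, hadj1, hadj2, hnadjxx', hnexx', cea, ceb⟩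
  obtain ⟨ya, ym, yb, hyaD, hymD, hybD, hadj_am, hadj_mb, hnadj_ab, hne_ab, cea, ceb⟩ := key
  obtain ⟨pa, hpaD, hapa, hpriva⟩ := private_of hD hc hmin hyaD h2 cea
  obtain ⟨pb, hpbD, hbpb, hprivb⟩ := private_of hD hc hmin hybD h2 ceb
  -- basic non-adjacency facts
  have npam : ¬ G.Adj ym pa := fun h => hadj_am.ne (hpriva ym hymD h).symm
  have npab : ¬ G.Adj yb pa := fun h => hne_ab (hpriva yb hybD h).symm
  have npba : ¬ G.Adj ya pb := fun h => hne_ab (hprivb ya hyaD h)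
  have npbm : ¬ G.Adj ym pb := fun h => hadj_mb.ne' (hprivb ym hymD h).symm
  have hpapb_ne : pa ≠ pb := by
    intro h
    exact hne_ab (hprivb ya hyaD (h ▸ hapa))
  have hpp : G.Adj pa pb := by
    by_contra hnp
    exact hP5 pa ya ym yb pb ⟨hapa.symm, hadj_am, hadj_mb, hbpb, fun h => npam h.symm,
      fun h => npab h.symm, hnp, hnadj_ab, npba, npbm,
      fun h => hpaD (h ▸ hymD), fun h => hpaD (h ▸ hybD), hpapb_ne, hne_ab,
      fun h => hpbD (h ▸ hyaD), fun h => hpbD (h ▸ hymD)⟩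
  refine ⟨{pa, ya, ym, yb, pb}, ?_, Or.inl ?_⟩
  · -- this 5-set dominates
    intro z
    by_contra hz
    push_neg at hz
    obtain ⟨hzC, hz2⟩ := hz
    simp only [Finset.mem_insert, Finset.mem_singleton, not_or] at hzC
    obtain ⟨hz_pa, hz_ya, hz_ym, hz_yb, hz_pb⟩ := hzC
    have na_pa : ¬ G.Adj pa z := hz2 pa (by simp)
    have na_ya : ¬ G.Adj ya z := hz2 ya (by simp)
    have na_ym : ¬ G.Adj ym z := hz2 ym (by simp)
    have na_yb : ¬ G.Adj yb z := hz2 yb (by simp)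
    have na_pb : ¬ G.Adj pb z := hz2 pb (by simp)
    -- z is dominated by D
    rcases hD z with hzD | ⟨d, hdD, hdz⟩
    · -- z itself is in D
      have hnadj_z_ym : ¬ G.Adj z ym := fun h => na_ym h.symm
      have hd2 : dIn G D z ym = 2 := by
        have hle := ecc z hzD ym hymD
        rcases Nat.lt_or_ge (dIn G D z ym) 2 with hlt | hge
        · rcases eq_or_adj_of_dIn_le_one (hc z hzD ym hymD) (by omega) with he | ha
          · exact absurd he hz_ym
          · exact absurd ha hnadj_z_ym
        · omega
      obtain ⟨w, hwD, hzw, hwym, -, -, hw_ne_z, hw_ne_ym⟩ :=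
        mid_of_dIn_two (hc z hzD ym hymD) hd2
      have hw_ne_ya : w ≠ ya := fun h => na_ya (h ▸ hzw).symm
      have hw_ne_yb : w ≠ yb := fun h => na_yb (h ▸ hzw).symm
      have nwpa : ¬ G.Adj w pa := fun h => hw_ne_ya (hpriva w hwD h)
      have nwpb : ¬ G.Adj w pb := fun h => hw_ne_yb (hprivb w hwD h)
      by_cases hwa : G.Adj w ya
      · by_cases hwb : G.Adj w yb
        · exact hP5 z w ya pa pb ⟨hzw, hwa, hapa, hpp,
            fun h => na_ya h.symm, fun h => na_pa h.symm, fun h => na_pb h.symm,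
            nwpa, nwpb, npba,
            hz_ya, hz_pa, hz_pb,
            fun h => hpaD (h ▸ hwD), fun h => hpbD (h ▸ hwD), fun h => hpbD (h ▸ hyaD)⟩
        · exact hP5 pb yb ym w z ⟨hbpb.symm, hadj_mb.symm, hwym.symm, hzw.symm,
            fun h => npbm h.symm, fun h => hw_ne_yb (hprivb w hwD h.symm), na_pb,
            fun h => hwb h.symm, na_yb, na_ym,
            fun h => hpbD (h ▸ hymD), fun h => hpbD (h ▸ hwD), fun h => hz_pb h.symm,
            fun h => hw_ne_yb h.symm, fun h => hz_yb h.symm, fun h => hz_ym h.symm⟩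
      · exact hP5 pa ya ym w z ⟨hapa.symm, hadj_am, hwym.symm, hzw.symm,
          fun h => npam h.symm, fun h => nwpa h.symm, na_pa,
          fun h => hwa h.symm, na_ya, na_ym,
          fun h => hpaD (h ▸ hymD), fun h => hpaD (h ▸ hwD), fun h => hz_pa h.symm,
          fun h => hw_ne_ya h.symm, fun h => hz_ya h.symm, fun h => hz_ym h.symm⟩
    · -- z has a neighbour d in D
      have hd_ne_ya : d ≠ ya := fun h => na_ya (h ▸ hdz)
      have hd_ne_ym : d ≠ ym := fun h => na_ym (h ▸ hdz)
      have hd_ne_yb : d ≠ yb := fun h => na_yb (h ▸ hdz)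
      have ndpa : ¬ G.Adj d pa := fun h => hd_ne_ya (hpriva d hdD h)
      have ndpb : ¬ G.Adj d pb := fun h => hd_ne_yb (hprivb d hdD h)
      by_cases hda : G.Adj d ya
      · exact hP5 z d ya pa pb ⟨hdz.symm, hda, hapa, hpp,
          fun h => na_ya h.symm, fun h => na_pa h.symm, fun h => na_pb h.symm,
          ndpa, ndpb, npba,
          hz_ya, hz_pa, hz_pb,
          fun h => hpaD (h ▸ hdD), fun h => hpbD (h ▸ hdD), fun h => hpbD (h ▸ hyaD)⟩
      by_cases hdb : G.Adj d yb
      · exact hP5 z d yb pb pa ⟨hdz.symm, hdb, hbpb, hpp.symm,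
          fun h => na_yb h.symm, fun h => na_pb h.symm, fun h => na_pa h.symm,
          ndpb, ndpa, npab,
          hz_yb, hz_pb, hz_pa,
          fun h => hpbD (h ▸ hdD), fun h => hpaD (h ▸ hdD), fun h => hpaD (h ▸ hybD)⟩
      by_cases hdm : G.Adj d ym
      · exact hP5 z d ym ya pa ⟨hdz.symm, hdm, hadj_am.symm, hapa,
          fun h => na_ym h.symm, fun h => na_ya h.symm, fun h => na_pa h.symm,
          hda, ndpa, npam,
          hz_ym, hz_ya, hz_pa,
          hd_ne_ya, fun h => hpaD (h ▸ hdD), fun h => hpaD (h ▸ hymD)⟩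
      -- d is adjacent to none of ya, ym, yb
      have hd2 : dIn G D d ym = 2 := by
        have hle := ecc d hdD ym hymD
        rcases Nat.lt_or_ge (dIn G D d ym) 2 with hlt | hge
        · rcases eq_or_adj_of_dIn_le_one (hc d hdD ym hymD) (by omega) with he | ha
          · exact absurd he hd_ne_ym
          · exact absurd ha hdm
        · omega
      obtain ⟨w, hwD, hdw, hwym, -, -, hw_ne_d, hw_ne_ym⟩ :=
        mid_of_dIn_two (hc d hdD ym hymD) hd2
      have hw_ne_ya : w ≠ ya := fun h => hda (h ▸ hdw)
      have hw_ne_yb : w ≠ yb := fun h => hdb (h ▸ hdw)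
      have nwpa : ¬ G.Adj w pa := fun h => hw_ne_ya (hpriva w hwD h)
      have nwpb : ¬ G.Adj w pb := fun h => hw_ne_yb (hprivb w hwD h)
      by_cases hwa : G.Adj w ya
      · by_cases hwb : G.Adj w yb
        · by_cases hwz : G.Adj w z
          · exact hP5 z w ya pa pb ⟨hwz.symm, hwa, hapa, hpp,
              fun h => na_ya h.symm, fun h => na_pa h.symm, fun h => na_pb h.symm,
              nwpa, nwpb, npba,
              hz_ya, hz_pa, hz_pb,
              fun h => hpaD (h ▸ hwD), fun h => hpbD (h ▸ hwD), fun h => hpbD (h ▸ hyaD)⟩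
          · exact hP5 z d w ya pa ⟨hdz.symm, hdw, hwa, hapa,
              fun h => hwz h.symm, fun h => na_ya h.symm, fun h => na_pa h.symm,
              hda, ndpa, nwpa,
              fun h => na_ym ((h ▸ hwym) : G.Adj z ym).symm, hz_ya, hz_pa,
              hd_ne_ya, fun h => hpaD (h ▸ hdD), fun h => hpaD (h ▸ hwD)⟩
        · exact hP5 pb yb ym w d ⟨hbpb.symm, hadj_mb.symm, hwym.symm, hdw.symm,
            fun h => npbm h.symm, fun h => nwpb h.symm, fun h => ndpb h.symm,
            fun h => hwb h.symm, fun h => hdb h.symm, fun h => hdm h.symm,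
            fun h => hpbD (h ▸ hymD), fun h => hpbD (h ▸ hwD), fun h => hpbD (h ▸ hdD),
            fun h => hw_ne_yb h.symm, fun h => hd_ne_yb h.symm, fun h => hd_ne_ym h.symm⟩
      · exact hP5 pa ya ym w d ⟨hapa.symm, hadj_am, hwym.symm, hdw.symm,
          fun h => npam h.symm, fun h => nwpa h.symm, fun h => ndpa h.symm,
          fun h => hwa h.symm, fun h => hda h.symm, fun h => hdm h.symm,
          fun h => hpaD (h ▸ hymD), fun h => hpaD (h ▸ hwD), fun h => hpaD (h ▸ hdD),
          fun h => hw_ne_ya h.symm, fun h => hd_ne_ya h.symm, fun h => hd_ne_ym h.symm⟩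
  · have h1 := Finset.card_insert_le pa ({ya, ym, yb, pb} : Finset V)
    have h2 := Finset.card_insert_le ya ({ym, yb, pb} : Finset V)
    have h3 := Finset.card_insert_le ym ({yb, pb} : Finset V)
    have h4 := Finset.card_insert_le yb ({pb} : Finset V)
    have h5 : ({pb} : Finset V).card = 1 := Finset.card_singleton pb
    omega


lemma build_embedding [DecidableEq V] {s : ℕ} {a b c d e : V}
    (h : IndP5 G a b c d e) (J : Finset V) (hJcard : J.card = s)
    (hindep : ∀ u ∈ J, ∀ v ∈ J, u ≠ v → ¬ G.Adj u v)
    (hdisj : ∀ u ∈ J, u ≠ a ∧ u ≠ b ∧ u ≠ c ∧ u ≠ d ∧ u ≠ e)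
    (hnadj : ∀ u ∈ J, ¬G.Adj u a ∧ ¬G.Adj u b ∧ ¬G.Adj u c ∧ ¬G.Adj u d ∧ ¬G.Adj u e) :
    Nonempty (sP1P5 s ↪g G) := by
  let p : Fin 5 → V := ![a, b, c, d, e]
  let g : Fin s → V := fun i => ↑(J.equivFin.symm (Fin.cast hJcard.symm i))
  have hg_mem : ∀ i, g i ∈ J := fun i => (J.equivFin.symm (Fin.cast hJcard.symm i)).2
  have hginj : Function.Injective g := by
    intro i j hij
    have h1 := J.equivFin.symm.injective (Subtype.coe_injective hij)
    have h2 : (Fin.cast hJcard.symm i).val = (Fin.cast hJcard.symm j).val := by rw [h1]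
    exact Fin.ext (by simpa using h2)
  have hp_mem : ∀ (j : Fin 5) (u : V), u ∈ J → u ≠ p j ∧ ¬ G.Adj u (p j) := by
    intro j u hu
    obtain ⟨n1, n2, n3, n4, n5⟩ := hdisj u hu
    obtain ⟨m1, m2, m3, m4, m5⟩ := hnadj u hu
    fin_cases j <;> simp [p] <;> tauto
  have hfin : Function.Injective (Sum.elim g p) := by
    rintro (i | i) (j | j) hij
    · exact congrArg Sum.inl (hginj (by simpa using hij))
    · exfalso
      exact (hp_mem j (g i) (hg_mem i)).1 (by simpa using hij)
    · exfalso
      exact (hp_mem i (g j) (hg_mem j)).1 (by simpa using hij.symm)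
    · simp only [Sum.elim_inr] at hij
      have hii : ∀ (i j : Fin 5), i ≠ j → p i ≠ p j := by
        intro i j hne
        fin_cases i <;> fin_cases j <;> simp_all [p] <;>
          first
            | exact h.hab.ne | exact h.hbc.ne | exact h.hcd.ne | exact h.hde.ne
            | exact h.hab.ne' | exact h.hbc.ne' | exact h.hcd.ne' | exact h.hde.ne'
            | exact h.dac | exact h.dad | exact h.dae | exact h.dbd | exact h.dbe | exact h.dce
            | exact h.dac.symm | exact h.dad.symm | exact h.dae.symm | exact h.dbd.symm
            | exact h.dbe.symm | exact h.dce.symm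
      by_contra hne
      exact hii i j (by simpa using hne) hij
  refine ⟨⟨⟨Sum.elim g p, hfin⟩, ?_⟩⟩
  rintro (i | i) (j | j)
  · show G.Adj (g i) (g j) ↔ False
    simp only [iff_false]
    intro hadj
    by_cases hij : i = j
    · subst hij; exact G.loopless.irrefl _ hadj
    · exact hindep _ (hg_mem i) _ (hg_mem j) (fun hh => hij (hginj hh)) hadj
  · show G.Adj (g i) (p j) ↔ False
    simp only [iff_false]
    exact (hp_mem j (g i) (hg_mem i)).2
  · show G.Adj (p i) (g j) ↔ False
    simp only [iff_false]
    exact fun hadj => (hp_mem i (g j) (hg_mem j)).2 hadj.symm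
  · show G.Adj (p i) (p j) ↔ (SimpleGraph.pathGraph 5).Adj i j
    rw [SimpleGraph.pathGraph_adj]
    fin_cases i <;> fin_cases j <;>
      simp [p] <;>
      first
        | exact G.loopless _
        | exact h.hab | exact h.hbc | exact h.hcd | exact h.hde
        | exact h.hab.symm | exact h.hbc.symm | exact h.hcd.symm | exact h.hde.symm
        | exact h.nac | exact h.nad | exact h.nae | exact h.nbd | exact h.nbe | exact h.nce
        | exact fun hh => h.nac hh.symm | exact fun hh => h.nad hh.symm
        | exact fun hh => h.nae hh.symm | exact fun hh => h.nbd hh.symm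
        | exact fun hh => h.nbe hh.symm | exact fun hh => h.nce hh.symm


end AuxP5

open AuxP5 in
theorem stmt_14 {V : Type} [Fintype V] [DecidableEq V] (G : SimpleGraph V)
    (s : ℕ) (hs : 1 ≤ s) (hconn : G.Connected)
    (hfree : ¬ Nonempty (sP1P5 s ↪g G)) :
    ∃ D : Finset V, (∀ v : V, v ∈ D ∨ ∃ u ∈ D, G.Adj u v) ∧
      D.card ≤ max 3 (max G.cliqueNum (s + 4)) := by
  classical
  by_cases hP5ex : ∃ a b c d e : V, IndP5 G a b c d e
  · obtain ⟨a, b, c, d, e, h⟩ := hP5ex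
    set P : Finset V := {a, b, c, d, e} with hP
    set R : Finset V := Finset.univ.filter (fun v => v ∉ P ∧ ∀ u ∈ P, ¬ G.Adj u v) with hR
    obtain ⟨I, hIF, hImax⟩ := Finset.exists_max_image
      (R.powerset.filter (fun I => ∀ u ∈ I, ∀ v ∈ I, u ≠ v → ¬ G.Adj u v))
      Finset.card ⟨∅, by simp⟩
    rw [Finset.mem_filter, Finset.mem_powerset] at hIF
    obtain ⟨hIR, hIindep⟩ := hIF
    have hIdom : ∀ r ∈ R, r ∉ I → ∃ u ∈ I, G.Adj u r := by
      intro r hr hrI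
      by_contra hno
      push_neg at hno
      have hmem : insert r I ∈ R.powerset.filter
          (fun I => ∀ u ∈ I, ∀ v ∈ I, u ≠ v → ¬ G.Adj u v) := by
        rw [Finset.mem_filter, Finset.mem_powerset]
        refine ⟨Finset.insert_subset hr hIR, ?_⟩
        intro u hu v hv huv
        rcases Finset.mem_insert.mp hu with rfl | hu'
        · rcases Finset.mem_insert.mp hv with rfl | hv'
          · exact absurd rfl huv
          · exact fun hadj => hno v hv' hadj.symm
        · rcases Finset.mem_insert.mp hv with rfl | hv'
          · exact fun hadj => hno u hu' hadj
          · exact hIindep u hu' v hv' huv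
      have hcard := hImax _ hmem
      rw [Finset.card_insert_of_notMem hrI] at hcard
      omega
    have hIcard : I.card < s := by
      by_contra hge
      push_neg at hge
      obtain ⟨J, hJI, hJcard⟩ := Finset.exists_subset_card_eq hge
      apply hfree
      refine build_embedding h J hJcard ?_ ?_ ?_
      · intro u hu v hv
        exact hIindep u (hJI hu) v (hJI hv)
      · intro u hu
        have := (Finset.mem_filter.mp (hIR (hJI hu))).2.1
        simp only [hP, Finset.mem_insert, Finset.mem_singleton, not_or] at this
        exact this
      · intro u hu
        have hn := (Finset.mem_filter.mp (hIR (hJI hu))).2.2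
        exact ⟨fun hh => hn a (by simp [hP]) hh.symm, fun hh => hn b (by simp [hP]) hh.symm,
          fun hh => hn c (by simp [hP]) hh.symm, fun hh => hn d (by simp [hP]) hh.symm,
          fun hh => hn e (by simp [hP]) hh.symm⟩
    refine ⟨P ∪ I, ?_, ?_⟩
    · intro v
      by_cases hv : v ∈ R
      · by_cases hvI : v ∈ I
        · exact Or.inl (Finset.mem_union_right _ hvI)
        · obtain ⟨u, hu, hadj⟩ := hIdom v hv hvI
          exact Or.inr ⟨u, Finset.mem_union_right _ hu, hadj⟩
      · rw [hR, Finset.mem_filter] at hv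
        push_neg at hv
        rcases Classical.em (v ∈ P) with hvP | hvP
        · exact Or.inl (Finset.mem_union_left _ hvP)
        · obtain ⟨u, hu, hadj⟩ := hv (Finset.mem_univ v) hvP
          exact Or.inr ⟨u, Finset.mem_union_left _ hu, hadj⟩
    · have hPcard : P.card ≤ 5 := by
        have h1 := Finset.card_insert_le a ({b, c, d, e} : Finset V)
        have h2 := Finset.card_insert_le b ({c, d, e} : Finset V)
        have h3 := Finset.card_insert_le c ({d, e} : Finset V)
        have h4 := Finset.card_insert_le d ({e} : Finset V)
        have h5 : ({e} : Finset V).card = 1 := Finset.card_singleton e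
        rw [hP]
        omega
      have hUcard := Finset.card_union_le P I
      have : (P ∪ I).card ≤ s + 4 := by omega
      exact le_trans this (le_trans (le_max_right _ _) (le_max_right _ _))
  · push_neg at hP5ex
    obtain ⟨D, hdom, hcase⟩ := p5free_case hP5ex hconn
    refine ⟨D, hdom, ?_⟩
    rcases hcase with h5 | hclq
    · have : D.card ≤ s + 4 := by omega
      exact le_trans this (le_trans (le_max_right _ _) (le_max_right _ _))
    · have : D.card ≤ G.cliqueNum := SimpleGraph.IsClique.card_le_cliqueNum (tc := hclq)
      exact le_trans this (le_trans (le_max_left _ _) (le_max_right _ _))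
end
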